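/- arXiv:math-ph/0408058 — 4 statements merged into one kernel-verified Lean document; each statement's English description precedes it below -/
import Mathlib

section
/- Let F be a real 2n×2n symplectic matrix and define the complex 2n×2n matrix N := −(i/2)·J·((1 − iJ)·F + 1 + iJ) (equivalently, N = (1/2)(F − 1) − (i/2)·J·(F + 1)). Then |det N| = 1 if and only if F is orthogonal, i.e. Fᵀ·F = 1. -/
open Matrix Complex

section helpers
variable {ι : Type*} [Fintype ι] [DecidableEq ι]

lemma mapR_mul (X Y : Matrix ι ι ℝ) :
    (X * Y).map Complex.ofReal = X.map Complex.ofReal * Y.map Complex.ofReal := by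
  ext i j; simp [Matrix.mul_apply, Matrix.map_apply]

lemma mapR_add_one (X : Matrix ι ι ℝ) :
    (X + 1).map Complex.ofReal = X.map Complex.ofReal + 1 := by
  ext i j; by_cases h : i = j <;>
    simp [Matrix.map_apply, Matrix.add_apply, Matrix.one_apply, h]

lemma mapR_neg_one : ((-1 : Matrix ι ι ℝ)).map Complex.ofReal = -1 := by
  ext i j; by_cases h : i = j <;>
    simp [Matrix.map_apply, Matrix.neg_apply, Matrix.one_apply, h]

lemma mapR_CT (X : Matrix ι ι ℝ) :
    (X.map Complex.ofReal)ᴴ = Xᵀ.map Complex.ofReal := by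
  ext i j; simp [Matrix.conjTranspose_apply, Matrix.map_apply, Complex.conj_ofReal]

lemma mapR_det (X : Matrix ι ι ℝ) :
    (X.map Complex.ofReal).det = (X.det : ℂ) := by
  have h : X.map Complex.ofReal = X.map (⇑Complex.ofRealHom) := rfl
  rw [h, ← RingHom.mapMatrix_apply, ← RingHom.map_det]; rfl
end helpers

lemma key_aux {m : Type*} [Fintype m] [DecidableEq m] (A B K : Matrix m m ℂ)
    (hK : K * K = -1) (hKH : Kᴴ = -K) (hA : Aᴴ = B) (hs : B * K * A = K) :
    ((-(Complex.I/2)) • (K * ((1 - Complex.I•K)*A + 1 + Complex.I•K)))ᴴ *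
      ((-(Complex.I/2)) • (K * ((1 - Complex.I•K)*A + 1 + Complex.I•K))) =
    (2:ℂ)⁻¹ • (B*A + 1) := by
  have hs' : B * (K * A) = K := by rw [← mul_assoc]; exact hs
  have hKK : ∀ M : Matrix m m ℂ, K * (K * M) = -M := fun M => by
    rw [← mul_assoc, hK, neg_one_mul]
  simp only [conjTranspose_smul, conjTranspose_mul, conjTranspose_add, conjTranspose_sub,
    conjTranspose_one, conjTranspose_smul, hKH, hA, star_smul, Complex.star_def, map_neg,
    map_div₀, Complex.conj_I, Complex.conj_ofNat]
  simp only [Matrix.mul_add, Matrix.add_mul, Matrix.sub_mul, Matrix.mul_sub, smul_mul_assoc,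
    Matrix.mul_smul, smul_smul, Matrix.mul_one, Matrix.one_mul, Matrix.neg_mul, Matrix.mul_neg,
    smul_add, smul_sub, smul_neg, neg_neg, neg_smul, mul_assoc]
  simp only [hKK, hs', hK, Matrix.mul_neg, Matrix.neg_mul, smul_neg, neg_neg, Matrix.mul_one]
  match_scalars <;> (try ring) <;> (try ring_nf) <;> (norm_num [Complex.I_sq, Complex.I_pow_four])

lemma prod_all_one {ι : Type*} [DecidableEq ι] (s : Finset ι) (f : ι → ℝ)
    (h1 : ∀ i ∈ s, 1 ≤ f i) (hp : ∏ i ∈ s, f i = 1) : ∀ i ∈ s, f i = 1 := by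
  intro i hi
  have he : f i * ∏ j ∈ s.erase i, f j = 1 := by
    rw [Finset.mul_prod_erase s f hi]; exact hp
  have hge : (1:ℝ) ≤ ∏ j ∈ s.erase i, f j := by
    calc (1:ℝ) = ∏ _j ∈ s.erase i, (1:ℝ) := by simp
    _ ≤ ∏ j ∈ s.erase i, f j :=
        Finset.prod_le_prod (fun _ _ => by norm_num)
          (fun j hj => h1 j (Finset.mem_of_mem_erase hj))
  nlinarith [h1 i hi]

lemma posSemidef_det_add_one {ι : Type*} [Fintype ι] [DecidableEq ι]
    (G : Matrix ι ι ℝ) (hGsd : G.PosSemidef) (hdetG : G.det = 1)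
    (hdet2 : (G + 1).det = 2 ^ Fintype.card ι) : G = 1 := by
  have hH : G.IsHermitian := hGsd.1
  have hspec := hH.spectral_theorem
  rw [RCLike.ofReal_real_eq_id, Function.id_comp] at hspec
  rw [Unitary.conjStarAlgAut_apply] at hspec
  set U : Matrix ι ι ℝ := (hH.eigenvectorUnitary : Matrix ι ι ℝ) with hUdef
  set μ : ι → ℝ := hH.eigenvalues with hμdef
  have hU1 : U * star U = 1 := (Unitary.mem_iff.mp hH.eigenvectorUnitary.2).2
  have hUdet : U.det * (star U).det = 1 := by rw [← Matrix.det_mul, hU1, Matrix.det_one]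
  have hGplus : G + 1 = U * (Matrix.diagonal μ + 1) * star U := by
    conv_rhs => rw [Matrix.mul_add, Matrix.add_mul, Matrix.mul_one, hU1]
    rw [hspec]
  have hdetplus : (G + 1).det = ∏ i, (μ i + 1) := by
    rw [hGplus, Matrix.det_mul, Matrix.det_mul]
    have h : U.det * (Matrix.diagonal μ + 1).det * (star U).det
        = (U.det * (star U).det) * (Matrix.diagonal μ + 1).det := by ring
    rw [h, hUdet, one_mul, ← Matrix.diagonal_one, Matrix.diagonal_add, Matrix.det_diagonal]
    try simp
  have hprodμ : ∏ i, μ i = 1 := by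
    have h := hH.det_eq_prod_eigenvalues
    rw [hdetG] at h
    exact_mod_cast h.symm
  have hμnonneg : ∀ i, 0 ≤ μ i := fun i => hGsd.eigenvalues_nonneg i
  have hμpos : ∀ i, 0 < μ i := by
    intro i
    rcases lt_or_eq_of_le (hμnonneg i) with h | h
    · exact h
    · exfalso
      have h0 : ∏ j, μ j = 0 := Finset.prod_eq_zero (Finset.mem_univ i) h.symm
      rw [hprodμ] at h0; norm_num at h0
  have hs_pos : ∀ i, 0 < Real.sqrt (μ i) := fun i => Real.sqrt_pos.mpr (hμpos i)
  have hsq : ∀ i, Real.sqrt (μ i) ^ 2 = μ i := fun i => Real.sq_sqrt (hμnonneg i)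
  have hf1 : ∀ i ∈ Finset.univ, 1 ≤ (fun i => (μ i + 1) / (2 * Real.sqrt (μ i))) i := by
    intro i _
    dsimp only
    rw [le_div_iff₀ (mul_pos two_pos (hs_pos i))]
    nlinarith [hsq i, sq_nonneg (Real.sqrt (μ i) - 1)]
  have hsqrtprod : ∏ i, Real.sqrt (μ i) = 1 := by
    have hp2 : (∏ i, Real.sqrt (μ i)) ^ 2 = 1 := by
      rw [← Finset.prod_pow]; simp_rw [hsq]; exact hprodμ
    have hpnn : 0 ≤ ∏ i, Real.sqrt (μ i) := Finset.prod_nonneg fun i _ => Real.sqrt_nonneg _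
    have hfac : ((∏ i, Real.sqrt (μ i)) - 1) * ((∏ i, Real.sqrt (μ i)) + 1) = 0 := by
      linear_combination hp2
    rcases mul_eq_zero.mp hfac with h' | h'
    · linarith
    · linarith
  have hfprod : ∏ i, (fun i => (μ i + 1) / (2 * Real.sqrt (μ i))) i = 1 := by
    dsimp only
    rw [Finset.prod_div_distrib, Finset.prod_mul_distrib, Finset.prod_const, hsqrtprod,
      ← hdetplus, hdet2, mul_one, Finset.card_univ]
    exact div_self (by positivity)
  have hμ1 : ∀ i, μ i = 1 := by
    intro i
    have hfi := prod_all_one Finset.univ _ hf1 hfprod i (Finset.mem_univ i)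
    have hden : (2:ℝ) * Real.sqrt (μ i) ≠ 0 := ne_of_gt (mul_pos two_pos (hs_pos i))
    rw [div_eq_one_iff_eq hden] at hfi
    have hzero : (Real.sqrt (μ i) - 1) ^ 2 = 0 := by linear_combination hfi + hsq i
    have hs1 : Real.sqrt (μ i) = 1 := by
      have := pow_eq_zero_iff (n := 2) (by norm_num) |>.mp hzero
      linarith [sub_eq_zero.mp this]
    rw [← hsq i, hs1]; norm_num
  have hdiag1 : Matrix.diagonal μ = 1 := by
    rw [show μ = fun _ => (1:ℝ) from funext hμ1, Matrix.diagonal_one]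
  rw [hspec, hdiag1, Matrix.mul_one, hU1]


theorem stmt_5 (n : ℕ) (F : Matrix (Fin n ⊕ Fin n) (Fin n ⊕ Fin n) ℝ)
    (hF : Fᵀ * Matrix.J (Fin n) ℝ * F = Matrix.J (Fin n) ℝ)
    (N : Matrix (Fin n ⊕ Fin n) (Fin n ⊕ Fin n) ℂ)
    (hN : N = (-(Complex.I / 2)) •
      ((Matrix.J (Fin n) ℝ).map Complex.ofReal *
        ((1 - Complex.I • (Matrix.J (Fin n) ℝ).map Complex.ofReal) * F.map Complex.ofReal
          + 1 + Complex.I • (Matrix.J (Fin n) ℝ).map Complex.ofReal))) :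
    ‖N.det‖ = 1 ↔ Fᵀ * F = 1 := by
  classical
  have hK2 : (Matrix.J (Fin n) ℝ).map Complex.ofReal * (Matrix.J (Fin n) ℝ).map Complex.ofReal
      = -1 := by
    rw [← mapR_mul, Matrix.J_squared, mapR_neg_one]
  have hKH : ((Matrix.J (Fin n) ℝ).map Complex.ofReal)ᴴ
      = -((Matrix.J (Fin n) ℝ).map Complex.ofReal) := by
    rw [mapR_CT, Matrix.J_transpose]
    ext i j; simp [Matrix.map_apply, Matrix.neg_apply]
  have hsC : Fᵀ.map Complex.ofReal * (Matrix.J (Fin n) ℝ).map Complex.ofReal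
      * F.map Complex.ofReal = (Matrix.J (Fin n) ℝ).map Complex.ofReal := by
    rw [← mapR_mul, ← mapR_mul, hF]
  have hNN : Nᴴ * N = (2:ℂ)⁻¹ • (Fᵀ.map Complex.ofReal * F.map Complex.ofReal + 1) := by
    rw [hN]; exact key_aux _ _ _ hK2 hKH (mapR_CT F) hsC
  have hdJ : IsUnit (Matrix.J (Fin n) ℝ).det := Matrix.isUnit_det_J (Fin n) ℝ
  have hFF : F.det * F.det = 1 := by
    have h := congrArg Matrix.det hF
    rw [Matrix.det_mul, Matrix.det_mul, Matrix.det_transpose] at h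
    refine hdJ.mul_left_cancel ?_
    rw [mul_one]; linear_combination h
  have hdetG : (Fᵀ * F).det = 1 := by rw [Matrix.det_mul, Matrix.det_transpose]; exact hFF
  have hCT : Fᴴ = Fᵀ := by ext i j; simp [Matrix.conjTranspose_apply]
  have hGsd : (Fᵀ * F).PosSemidef := by
    have h := Matrix.posSemidef_conjTranspose_mul_self F
    rwa [hCT] at h
  have hreal : (‖N.det‖)^2
      = (2:ℝ)⁻¹ ^ (Fintype.card (Fin n ⊕ Fin n)) * (Fᵀ * F + 1).det := by
    have e1 : (((‖N.det‖)^2 : ℝ) : ℂ) = Nᴴ.det * N.det := by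
      rw [Matrix.det_conjTranspose, Complex.star_def, mul_comm, Complex.mul_conj,
        Complex.sq_norm]
    have e2 : Nᴴ.det * N.det
        = (2:ℂ)⁻¹ ^ (Fintype.card (Fin n ⊕ Fin n)) * (((Fᵀ * F + 1).det : ℝ) : ℂ) := by
      rw [← Matrix.det_mul, hNN, Matrix.det_smul, ← mapR_mul, ← mapR_add_one, mapR_det]
    have e3 := e1.trans e2
    rw [show ((2:ℂ)⁻¹ ^ (Fintype.card (Fin n ⊕ Fin n)) * (((Fᵀ * F + 1).det : ℝ) : ℂ))
        = ((((2:ℝ)⁻¹ ^ (Fintype.card (Fin n ⊕ Fin n)) * (Fᵀ * F + 1).det : ℝ)) : ℂ) by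
      push_cast; ring] at e3
    exact_mod_cast e3
  have habs : ‖N.det‖ = 1 ↔ (‖N.det‖)^2 = 1 := by
    constructor
    · intro h; rw [h]; norm_num
    · intro h
      have h' : (‖N.det‖ - 1) * (‖N.det‖ + 1) = 0 := by
        linear_combination h
      rcases mul_eq_zero.mp h' with h'' | h''
      · linarith
      · linarith [norm_nonneg N.det]
  rw [habs, hreal]
  constructor
  · intro h1
    have hdet2 : (Fᵀ * F + 1).det = 2 ^ (Fintype.card (Fin n ⊕ Fin n)) := by
      have h2 : ((2:ℝ) ^ (Fintype.card (Fin n ⊕ Fin n))) ≠ 0 := by positivity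
      rw [inv_pow] at h1
      field_simp at h1
      simpa using h1
    exact posSemidef_det_add_one _ hGsd hdetG hdet2
  · intro hFO
    rw [hFO, show ((1:Matrix (Fin n ⊕ Fin n) (Fin n ⊕ Fin n) ℝ) + 1) = (2:ℝ) • 1 from
      (two_smul ℝ _).symm, Matrix.det_smul, Matrix.det_one, mul_one, ← mul_pow]
    norm_num
end

section
/- Let F be a real 2n×2n symplectic matrix such that F − 1 is invertible, and let A := (1/2)·J·(F + 1)·(F − 1)⁻¹. Then the complex matrix 1 − 2iA is invertible, and for every real vector z ∈ ℝ^{2n} one has Re( zᵀ [1 − (1 + iJ)·(1 − 2iA)⁻¹·(1 − iJ)] z ) ≥ 0; equivalently, the Gaussian factor |exp(−(1/(4ħ))·zᵀ[1 − (1+iJ)(1−2iA)⁻¹(1−iJ)]z)| is ≤ 1 for every ħ > 0. -/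
open Matrix Complex

section aux

variable {m : Type*} [Fintype m] [DecidableEq m]

open ComplexOrder in
lemma aux_re_nonneg (y : m → ℂ) : 0 ≤ (star y ⬝ᵥ y).re := by
  have h := dotProduct_star_self_nonneg y
  simpa using (Complex.le_def.mp h).1

open ComplexOrder in
lemma aux_sum_zero (v u : m → ℂ) (h : star v ⬝ᵥ v + star u ⬝ᵥ u = 0) : v = 0 := by
  have hv' : star v ⬝ᵥ v = 0 :=
    ((add_eq_zero_iff_of_nonneg (dotProduct_star_self_nonneg v)
      (dotProduct_star_self_nonneg u)).mp h).1
  exact dotProduct_star_self_eq_zero.mp hv'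

/-- Core algebraic identity. -/
lemma aux_core (P Q Fc K : Matrix m m ℂ)
    (hK : K = Q * Fc - P)
    (h1 : P + Q = 1) (hPQ : P * Q = 0) (hQP : Q * P = 0)
    (hPP : P * P = P) (hQQ : Q * Q = Q)
    (hPH : Pᴴ = P) (hQH : Qᴴ = Q)
    (hFH : Fcᴴ * (P - Q) * Fc = P - Q)
    (hKd : IsUnit K.det) :
    ∃ G W : Matrix m m ℂ,
      (1 - (P * (Fc * (K⁻¹ * Q)) + P * (Fc * (K⁻¹ * Q)))) +
        (1 - (P * (Fc * (K⁻¹ * Q)) + P * (Fc * (K⁻¹ * Q))))ᴴ =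
      (Gᴴ * G + Gᴴ * G) + (Wᴴ * W + Wᴴ * W) := by
  have hKK : K * K⁻¹ = 1 := K.mul_nonsing_inv hKd
  have hKK' : K⁻¹ * K = 1 := K.nonsing_inv_mul hKd
  have hPK : P * K = -P := by
    rw [hK, mul_sub, ← mul_assoc, hPQ, zero_mul, hPP, zero_sub]
  have hPKi : P * K⁻¹ = -P := by
    have h2 : P * K * K⁻¹ = -P * K⁻¹ := by rw [hPK]
    rw [mul_assoc, hKK, mul_one, neg_mul] at h2
    exact neg_eq_iff_eq_neg.mp h2.symm
  have hKH : Kᴴ = Fcᴴ * Q - P := by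
    rw [hK, conjTranspose_sub, conjTranspose_mul, hQH, hPH]
  have hKHd : IsUnit Kᴴ.det := by
    rw [Matrix.det_conjTranspose]; exact hKd.star
  have hKiH : K⁻¹ᴴ = Kᴴ⁻¹ := K.conjTranspose_nonsing_inv
  have hKHKi : Kᴴ⁻¹ * Kᴴ = 1 := Kᴴ.nonsing_inv_mul hKHd
  have hKiP : Kᴴ⁻¹ * P = -P := by
    have h3 := congrArg conjTranspose hPKi
    rw [conjTranspose_mul, hKiH, hPH, conjTranspose_neg, hPH] at h3
    exact h3
  set T : Matrix m m ℂ := P * (Fc * (K⁻¹ * Q)) with hT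
  set W : Matrix m m ℂ := K⁻¹ * Q with hW
  refine ⟨P - T, W, ?_⟩
  -- helpers (right-assoc rewriting)
  have e1 : ∀ X : Matrix m m ℂ, P * (P * X) = P * X := fun X => by
    rw [← mul_assoc, hPP]
  have e2 : ∀ X : Matrix m m ℂ, Q * (Q * X) = Q * X := fun X => by
    rw [← mul_assoc, hQQ]
  have e3 : ∀ X : Matrix m m ℂ, P * (Q * X) = 0 := fun X => by
    rw [← mul_assoc, hPQ, zero_mul]
  have e8 : ∀ X : Matrix m m ℂ, K * (K⁻¹ * X) = X := fun X => by
    rw [← mul_assoc, hKK, one_mul]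
  have e9 : ∀ X : Matrix m m ℂ, Kᴴ⁻¹ * (Kᴴ * X) = X := fun X => by
    rw [← mul_assoc, hKHKi, one_mul]
  have e5 : ∀ X : Matrix m m ℂ, P * (K⁻¹ * X) = -(P * X) := fun X => by
    rw [← mul_assoc, hPKi, neg_mul]
  have hWH : Wᴴ = Q * Kᴴ⁻¹ := by rw [hW, conjTranspose_mul, hKiH, hQH]
  -- conjTranspose of T
  have hTH : Tᴴ = Q * (Kᴴ⁻¹ * (Fcᴴ * P)) := by
    rw [hT]
    simp only [conjTranspose_mul, hPH, hQH, hKiH, mul_assoc]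
    rw [hWH, mul_assoc]
  -- K^H K identity
  have hK2 : Kᴴ * K = Fcᴴ * (Q * Fc) + P := by
    rw [hKH, hK]
    calc (Fcᴴ * Q - P) * (Q * Fc - P)
        = Fcᴴ * (Q * (Q * Fc)) - Fcᴴ * (Q * P) - P * (Q * Fc) + P * P := by
          simp only [sub_mul, mul_sub, mul_assoc]; abel
      _ = Fcᴴ * (Q * Fc) + P := by
          rw [e2, hQP, mul_zero, e3, hPP]; abel
  -- symplectic relation
  have hdiff : Fcᴴ * (P * Fc) - Fcᴴ * (Q * Fc) = P - Q := by
    have := hFH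
    rw [mul_sub, sub_mul] at this
    simpa only [mul_assoc] using this
  have hmid : Fcᴴ * (P * Fc) + 1 = Kᴴ * K + P := by
    calc Fcᴴ * (P * Fc) + 1
        = (Fcᴴ * (P * Fc) - Fcᴴ * (Q * Fc)) + (Fcᴴ * (Q * Fc) + 1) := by abel
      _ = (P - Q) + (Fcᴴ * (Q * Fc) + (P + Q)) := by rw [hdiff, h1]
      _ = (Fcᴴ * (Q * Fc) + P) + P := by abel
      _ = Kᴴ * K + P := by rw [hK2]
  -- T^H T + W^H W = Q
  have hinner : Fcᴴ * (P * (Fc * W)) + W = Kᴴ * Q := by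
    have h4 := congrArg (· * W) hmid
    simp only [add_mul, one_mul, mul_assoc] at h4
    rw [hW] at h4
    rw [e8, e5, hPQ, neg_zero, add_zero] at h4
    simpa only [mul_assoc, ← hW] using h4
  have hTT : Tᴴ * T + Wᴴ * W = Q := by
    calc Tᴴ * T + Wᴴ * W
        = Q * (Kᴴ⁻¹ * (Fcᴴ * (P * (P * (Fc * W))))) + Q * (Kᴴ⁻¹ * W) := by
          rw [hTH, hWH, hT, hW]; simp only [mul_assoc]
      _ = Q * (Kᴴ⁻¹ * (Fcᴴ * (P * (Fc * W)) + W)) := by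
          rw [e1, mul_add, mul_add]
      _ = Q * Q := by rw [hinner, e9]
      _ = Q := hQQ
  -- P T = T, T^H P = T^H
  have hPT : P * T = T := by rw [hT, e1]
  have hTHP : Tᴴ * P = Tᴴ := by
    have := congrArg conjTranspose hPT
    rw [conjTranspose_mul, hPH] at this
    exact this
  have hGW : (P - T)ᴴ * (P - T) + Wᴴ * W = 1 - T - Tᴴ := by
    have hexp : (P - T)ᴴ * (P - T) = P - T - Tᴴ + Tᴴ * T := by
      rw [conjTranspose_sub, hPH, sub_mul, mul_sub, mul_sub, hPP, hPT, hTHP]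
      abel
    rw [hexp, ← h1]
    have := hTT
    calc P - T - Tᴴ + Tᴴ * T + Wᴴ * W = P + (Tᴴ * T + Wᴴ * W) - T - Tᴴ := by abel
      _ = P + Q - T - Tᴴ := by rw [hTT]
      _ = P + Q - T - Tᴴ := rfl
  have hBH : (1 - (T + T))ᴴ = 1 - (Tᴴ + Tᴴ) := by
    rw [conjTranspose_sub, conjTranspose_one, conjTranspose_add]
  rw [hBH]
  calc (1 - (T + T)) + (1 - (Tᴴ + Tᴴ))
      = (1 - T - Tᴴ) + (1 - T - Tᴴ) := by abel
    _ = ((P - T)ᴴ * (P - T) + Wᴴ * W) + ((P - T)ᴴ * (P - T) + Wᴴ * W) := by rw [hGW]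
    _ = ((P - T)ᴴ * (P - T) + (P - T)ᴴ * (P - T)) + (Wᴴ * W + Wᴴ * W) := by abel

end aux

set_option maxHeartbeats 1000000 in
theorem stmt_7 (n : ℕ) (F : Matrix (Fin n ⊕ Fin n) (Fin n ⊕ Fin n) ℝ)
    (hF : Fᵀ * Matrix.J (Fin n) ℝ * F = Matrix.J (Fin n) ℝ)
    (hinv : IsUnit (F - 1))
    (A : Matrix (Fin n ⊕ Fin n) (Fin n ⊕ Fin n) ℝ)
    (hA : A = (1 / 2 : ℝ) • (Matrix.J (Fin n) ℝ * (F + 1) * (F - 1)⁻¹))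
    (B : Matrix (Fin n ⊕ Fin n) (Fin n ⊕ Fin n) ℂ)
    (hB : B = 1 - (1 + Complex.I • (Matrix.J (Fin n) ℝ).map Complex.ofReal) *
      (1 - (2 * Complex.I) • A.map Complex.ofReal)⁻¹ *
      (1 - Complex.I • (Matrix.J (Fin n) ℝ).map Complex.ofReal)) :
    IsUnit (1 - (2 * Complex.I) • A.map Complex.ofReal) ∧
    ∀ z : (Fin n ⊕ Fin n) → ℝ,
      (0 ≤ ((fun j => (z j : ℂ)) ⬝ᵥ (B *ᵥ fun j => (z j : ℂ))).re) ∧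
      ∀ hbar : ℝ, 0 < hbar →
        ‖Complex.exp (-(1 / (4 * hbar)) *
          ((fun j => (z j : ℂ)) ⬝ᵥ (B *ᵥ fun j => (z j : ℂ))))‖ ≤ 1 := by
  classical
  set J' : Matrix (Fin n ⊕ Fin n) (Fin n ⊕ Fin n) ℂ :=
    (Matrix.J (Fin n) ℝ).map Complex.ofReal with hJ'
  set F' : Matrix (Fin n ⊕ Fin n) (Fin n ⊕ Fin n) ℂ := F.map Complex.ofReal with hF'
  set A' : Matrix (Fin n ⊕ Fin n) (Fin n ⊕ Fin n) ℂ := A.map Complex.ofReal with hA'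
  -- map helpers
  have hcoe : ∀ (M : Matrix (Fin n ⊕ Fin n) (Fin n ⊕ Fin n) ℝ),
      M.map Complex.ofReal = Complex.ofRealHom.mapMatrix M := fun M => rfl
  have hdet : IsUnit (F - 1).det := (Matrix.isUnit_iff_isUnit_det _).mp hinv
  -- real identity
  have hAF : (A + A) * (F - 1) = Matrix.J (Fin n) ℝ * (F + 1) := by
    rw [hA]
    have h2 : ((1 / 2 : ℝ) • (Matrix.J (Fin n) ℝ * (F + 1) * (F - 1)⁻¹)) +
        ((1 / 2 : ℝ) • (Matrix.J (Fin n) ℝ * (F + 1) * (F - 1)⁻¹)) =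
        Matrix.J (Fin n) ℝ * (F + 1) * (F - 1)⁻¹ := by
      rw [← add_smul]; norm_num
    rw [h2, mul_assoc, Matrix.nonsing_inv_mul _ hdet, mul_one]
  -- complexified identity
  have hAF' : (A' + A') * (F' - 1) = J' * (F' + 1) := by
    have h3 := congrArg Complex.ofRealHom.mapMatrix hAF
    simp only [_root_.map_mul, _root_.map_add, _root_.map_sub, _root_.map_one] at h3
    simpa only [hJ', hF', hA', hcoe] using h3
  -- symplectic identity complexified
  have hFsymp' : F'ᵀ * J' * F' = J' := by
    have h4 := congrArg Complex.ofRealHom.mapMatrix hF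
    simp only [_root_.map_mul] at h4
    have ht : Complex.ofRealHom.mapMatrix Fᵀ = (Complex.ofRealHom.mapMatrix F)ᵀ := by
      rw [RingHom.mapMatrix_apply, RingHom.mapMatrix_apply, ← Matrix.transpose_map]
    rw [ht] at h4
    simpa only [hJ', hF', hcoe] using h4
  -- real-entried matrices: conjTranspose = transpose
  have hFH' : F'ᴴ = F'ᵀ := by
    ext i j
    simp [hF', Matrix.conjTranspose_apply, Matrix.transpose_apply, Matrix.map_apply,
      Complex.conj_ofReal]
  have hJJ' : J' * J' = -1 := by
    have h5 := congrArg Complex.ofRealHom.mapMatrix (Matrix.J_squared (Fin n) ℝ)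
    simp only [_root_.map_mul, _root_.map_neg, _root_.map_one] at h5
    simpa only [hJ', hcoe] using h5
  have hJH : J'ᴴ = -J' := by
    ext i j
    have h6 := congrFun (congrFun (Matrix.J_transpose (Fin n) ℝ) i) j
    simp only [Matrix.transpose_apply, Matrix.neg_apply] at h6
    simp [hJ', Matrix.conjTranspose_apply, Matrix.map_apply, Complex.conj_ofReal,
      Matrix.neg_apply, h6]
  -- projections
  set Pp : Matrix (Fin n ⊕ Fin n) (Fin n ⊕ Fin n) ℂ :=
    (1 / 2 : ℂ) • (1 + Complex.I • J') with hPp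
  set Qm : Matrix (Fin n ⊕ Fin n) (Fin n ⊕ Fin n) ℂ :=
    (1 / 2 : ℂ) • (1 - Complex.I • J') with hQm
  have hX : (Complex.I • J') * (Complex.I • J') = 1 := by
    rw [smul_mul_assoc, mul_smul_comm, smul_smul, Complex.I_mul_I, hJJ']
    simp
  have h1 : Pp + Qm = 1 := by rw [hPp, hQm]; module
  have hPmQ : Pp - Qm = Complex.I • J' := by rw [hPp, hQm]; module
  have hPQ : Pp * Qm = 0 := by
    have hM : (1 + Complex.I • J') * (1 - Complex.I • J') = 0 := by
      simp only [mul_sub, add_mul, one_mul, mul_one, hX]; abel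
    rw [hPp, hQm, smul_mul_assoc, mul_smul_comm, hM, smul_zero, smul_zero]
  have hQP : Qm * Pp = 0 := by
    have hM : (1 - Complex.I • J') * (1 + Complex.I • J') = 0 := by
      simp only [mul_add, sub_mul, one_mul, mul_one, hX]; abel
    rw [hPp, hQm, smul_mul_assoc, mul_smul_comm, hM, smul_zero, smul_zero]
  have hPP : Pp * Pp = Pp := by
    have hM : (1 + Complex.I • J') * (1 + Complex.I • J') =
        (1 + Complex.I • J') + (1 + Complex.I • J') := by
      simp only [mul_add, add_mul, one_mul, mul_one, hX]; abel
    rw [hPp, smul_mul_assoc, mul_smul_comm, hM]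
    module
  have hQQ : Qm * Qm = Qm := by
    have hM : (1 - Complex.I • J') * (1 - Complex.I • J') =
        (1 - Complex.I • J') + (1 - Complex.I • J') := by
      simp only [mul_sub, sub_mul, one_mul, mul_one, hX]; abel
    rw [hQm, smul_mul_assoc, mul_smul_comm, hM]
    module
  have hstar_half : star (1 / 2 : ℂ) = 1 / 2 := by
    simp
  have hPH : Ppᴴ = Pp := by
    rw [hPp, Matrix.conjTranspose_smul, Matrix.conjTranspose_add,
      Matrix.conjTranspose_one, Matrix.conjTranspose_smul, hJH, hstar_half]
    simp only [Complex.star_def, Complex.conj_I]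
    module
  have hQH : Qmᴴ = Qm := by
    rw [hQm, Matrix.conjTranspose_smul, Matrix.conjTranspose_sub,
      Matrix.conjTranspose_one, Matrix.conjTranspose_smul, hJH, hstar_half]
    simp only [Complex.star_def, Complex.conj_I]
    module
  have hsymp : F'ᴴ * (Pp - Qm) * F' = Pp - Qm := by
    rw [hPmQ, hFH', mul_smul_comm, smul_mul_assoc, hFsymp']
  set K : Matrix (Fin n ⊕ Fin n) (Fin n ⊕ Fin n) ℂ := Qm * F' - Pp with hKdef
  have hPK : Pp * K = -Pp := by
    rw [hKdef, mul_sub, ← mul_assoc, hPQ, zero_mul, hPP, zero_sub]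
  -- K invertible
  have hKd : IsUnit K.det := by
    rw [isUnit_iff_ne_zero]
    intro hdet0
    obtain ⟨v, hv0, hKv⟩ := (Matrix.exists_mulVec_eq_zero_iff).mpr hdet0
    have h1v : Pp *ᵥ v = 0 := by
      have h7 : (Pp * K) *ᵥ v = 0 := by
        rw [← Matrix.mulVec_mulVec, hKv, Matrix.mulVec_zero]
      rw [hPK, Matrix.neg_mulVec, neg_eq_zero] at h7
      exact h7
    have hvQ : Qm *ᵥ v = v := by
      have h8 : (Pp + Qm) *ᵥ v = v := by rw [h1, Matrix.one_mulVec]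
      rw [Matrix.add_mulVec, h1v, zero_add] at h8
      exact h8
    set u := F' *ᵥ v with hu
    have hQu : Qm *ᵥ u = 0 := by
      rw [hu, Matrix.mulVec_mulVec]
      have h9 : Qm * F' = K + Pp := by rw [hKdef]; abel
      rw [h9, Matrix.add_mulVec, hKv, h1v, add_zero]
    have hPu : Pp *ᵥ u = u := by
      have h10 : (Pp + Qm) *ᵥ u = u := by rw [h1, Matrix.one_mulVec]
      rw [Matrix.add_mulVec, hQu, add_zero] at h10
      exact h10
    have key : ∀ w, star v ⬝ᵥ (F'ᴴ *ᵥ w) = star u ⬝ᵥ w := by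
      intro w
      rw [Matrix.dotProduct_mulVec, ← Matrix.star_mulVec]
    have hform : star v ⬝ᵥ ((Pp - Qm) *ᵥ v) = star u ⬝ᵥ ((Pp - Qm) *ᵥ u) := by
      conv_lhs => rw [← hsymp]
      rw [← Matrix.mulVec_mulVec, ← Matrix.mulVec_mulVec, key, hu]
    have hlhs : (Pp - Qm) *ᵥ v = -v := by
      rw [Matrix.sub_mulVec, h1v, hvQ, zero_sub]
    have hrhs : (Pp - Qm) *ᵥ u = u := by
      rw [Matrix.sub_mulVec, hPu, hQu, sub_zero]
    rw [hlhs, hrhs, dotProduct_neg] at hform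
    have hzero : star v ⬝ᵥ v + star u ⬝ᵥ u = 0 := by
      rw [← hform]; abel
    exact hv0 (aux_sum_zero v u hzero)
  have hKK : K * K⁻¹ = 1 := K.mul_nonsing_inv hKd
  have hPKi : Pp * K⁻¹ = -Pp := by
    have h2 : Pp * K * K⁻¹ = -Pp * K⁻¹ := by rw [hPK]
    rw [mul_assoc, hKK, mul_one, neg_mul] at h2
    exact neg_eq_iff_eq_neg.mp h2.symm
  -- C (F' - 1) = K + K
  have hC : (1 - (2 * Complex.I) • A') * (F' - 1) = K + K := by
    have h11 : (2 * Complex.I) • (A' * (F' - 1)) = Complex.I • (J' * (F' + 1)) := by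
      rw [mul_comm (2:ℂ), ← smul_smul, two_smul, ← add_mul, hAF']
    rw [sub_mul, one_mul, smul_mul_assoc, h11, hKdef, hPp, hQm]
    simp only [mul_add, add_mul, sub_mul, mul_sub, mul_one, one_mul, smul_mul_assoc,
      smul_add, smul_sub]
    module
  have hKKd : IsUnit (K + K).det := by
    have h12 : K + K = (2 : ℂ) • K := (two_smul ℂ K).symm
    rw [h12, Matrix.det_smul, isUnit_iff_ne_zero]
    exact mul_ne_zero (pow_ne_zero _ two_ne_zero) (isUnit_iff_ne_zero.mp hKd)
  have hCu : IsUnit (1 - (2 * Complex.I) • A') := by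
    rw [Matrix.isUnit_iff_isUnit_det]
    have h13 := congrArg Matrix.det hC
    rw [Matrix.det_mul] at h13
    rw [isUnit_iff_ne_zero]
    intro h0
    rw [h0, zero_mul] at h13
    exact isUnit_iff_ne_zero.mp hKKd h13.symm
  have hCinv : (1 - (2 * Complex.I) • A')⁻¹ = (1 / 2 : ℂ) • ((F' - 1) * K⁻¹) :=
    Matrix.inv_eq_right_inv (by
      rw [mul_smul_comm, ← mul_assoc, hC, add_mul, Matrix.mul_nonsing_inv _ hKd]
      rw [smul_add]
      module)
  -- B in core form
  set T : Matrix (Fin n ⊕ Fin n) (Fin n ⊕ Fin n) ℂ := Pp * (F' * (K⁻¹ * Qm)) with hT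
  have hE : Pp * ((F' - 1) * K⁻¹) * Qm = T := by
    rw [hT]
    have : Pp * ((F' - 1) * K⁻¹) * Qm
        = Pp * (F' * (K⁻¹ * Qm)) - Pp * K⁻¹ * Qm := by
      simp only [sub_mul, mul_sub, one_mul, mul_assoc]
    rw [this, hPKi, neg_mul, hPQ, neg_zero, sub_zero]
  have hB2 : B = 1 - (T + T) := by
    have hPP2 : (1 : Matrix (Fin n ⊕ Fin n) (Fin n ⊕ Fin n) ℂ) + Complex.I • J'
        = Pp + Pp := by rw [hPp]; module
    have hQQ2 : (1 : Matrix (Fin n ⊕ Fin n) (Fin n ⊕ Fin n) ℂ) - Complex.I • J'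
        = Qm + Qm := by rw [hQm]; module
    rw [hB, hCinv, hPP2, hQQ2]
    congr 1
    calc (Pp + Pp) * ((1 / 2 : ℂ) • ((F' - 1) * K⁻¹)) * (Qm + Qm)
        = (1 / 2 : ℂ) • ((Pp + Pp) * ((F' - 1) * K⁻¹) * (Qm + Qm)) := by
          rw [mul_smul_comm, smul_mul_assoc]
      _ = (1 / 2 : ℂ) • ((Pp * ((F' - 1) * K⁻¹) * Qm + Pp * ((F' - 1) * K⁻¹) * Qm)
            + (Pp * ((F' - 1) * K⁻¹) * Qm + Pp * ((F' - 1) * K⁻¹) * Qm)) := by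
          simp only [add_mul, mul_add]
      _ = T + T := by rw [hE]; module
  -- core identity
  obtain ⟨G, W, hGW⟩ := aux_core Pp Qm F' K hKdef h1 hPQ hQP hPP hQQ hPH hQH hsymp hKd
  rw [← hT] at hGW
  refine ⟨hCu, ?_⟩
  intro z
  set x : (Fin n ⊕ Fin n) → ℂ := fun j => (z j : ℂ) with hx
  have hxstar : star x = x := by
    funext j
    simp [hx, Complex.star_def, Complex.conj_ofReal]
  set S : ℂ := x ⬝ᵥ (B *ᵥ x) with hS
  have hstarS : x ⬝ᵥ (Bᴴ *ᵥ x) = star S := by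
    rw [hS]
    calc x ⬝ᵥ (Bᴴ *ᵥ x) = (x ᵥ* Bᴴ) ⬝ᵥ x := Matrix.dotProduct_mulVec x Bᴴ x
      _ = star (B *ᵥ x) ⬝ᵥ x := by rw [Matrix.star_mulVec, hxstar]
      _ = star (B *ᵥ x) ⬝ᵥ star x := by rw [hxstar]
      _ = star (x ⬝ᵥ (B *ᵥ x)) := Matrix.star_dotProduct_star _ _
  have hquad : ∀ (M : Matrix (Fin n ⊕ Fin n) (Fin n ⊕ Fin n) ℂ),
      x ⬝ᵥ ((Mᴴ * M) *ᵥ x) = star (M *ᵥ x) ⬝ᵥ (M *ᵥ x) := by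
    intro M
    calc x ⬝ᵥ ((Mᴴ * M) *ᵥ x) = x ⬝ᵥ (Mᴴ *ᵥ (M *ᵥ x)) := by rw [Matrix.mulVec_mulVec]
      _ = (x ᵥ* Mᴴ) ⬝ᵥ (M *ᵥ x) := Matrix.dotProduct_mulVec _ _ _
      _ = star (M *ᵥ x) ⬝ᵥ (M *ᵥ x) := by rw [Matrix.star_mulVec, hxstar]
  have hsum : S + star S = x ⬝ᵥ ((B + Bᴴ) *ᵥ x) := by
    rw [Matrix.add_mulVec, dotProduct_add, hstarS, hS]
  have hBBH : B + Bᴴ = (Gᴴ * G + Gᴴ * G) + (Wᴴ * W + Wᴴ * W) := by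
    rw [hB2]; exact hGW
  have hSre : 0 ≤ S.re := by
    have h14 : S + star S = (star (G *ᵥ x) ⬝ᵥ (G *ᵥ x) + star (G *ᵥ x) ⬝ᵥ (G *ᵥ x))
        + (star (W *ᵥ x) ⬝ᵥ (W *ᵥ x) + star (W *ᵥ x) ⬝ᵥ (W *ᵥ x)) := by
      rw [hsum, hBBH]
      simp only [Matrix.add_mulVec, dotProduct_add]
      rw [hquad G, hquad W]
    have h15 : (S + star S).re = 2 * S.re := by
      simp [Complex.add_re, Complex.star_def]
      ring
    have h16 : 0 ≤ (S + star S).re := by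
      rw [h14]
      simp only [Complex.add_re]
      have g1 := aux_re_nonneg (G *ᵥ x)
      have g2 := aux_re_nonneg (W *ᵥ x)
      linarith
    linarith [h15 ▸ h16]
  refine ⟨hSre, ?_⟩
  intro hbar hb
  rw [Complex.norm_exp]
  rw [Real.exp_le_one_iff]
  have h17 : (-(1 / (4 * (hbar : ℂ))) * S) = ((-(1 / (4 * hbar)) : ℝ) : ℂ) * S := by
    push_cast
    ring
  rw [h17, Complex.re_ofReal_mul]
  have h18 : (0:ℝ) < 4 * hbar := by linarith
  have h19 : (-(1 / (4 * hbar)) : ℝ) ≤ 0 := by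
    rw [neg_nonpos]
    positivity
  exact mul_nonpos_of_nonpos_of_nonneg h19 hSre
end

section
/- (Mandelstam–Tamm inequality.) Let E be a complex Hilbert space, H a bounded self-adjoint operator on E, ψ ∈ E with ‖ψ‖ = 1, and ħ > 0. Set Ē := ⟨ψ, Hψ⟩ (a real number) and ΔE := √(⟨ψ, (H − Ē·1)²ψ⟩), and assume ΔE > 0. Then for every t with 0 ≤ t ≤ πħ/(2ΔE), the return probability satisfies |⟨ψ, exp(−(i t/ħ)·H) ψ⟩|² ≥ cos²(t·ΔE/ħ). -/
open scoped InnerProductSpace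
open Filter Topology Set


private lemma mt_eps {F F' : ℝ → ℂ} {ω T ε : ℝ}
    (hω : 0 < ω) (hT : 0 ≤ T) (hTω : ω * T ≤ Real.pi / 2)
    (hF0 : (F 0).re = 1)
    (hdiff : ∀ s : ℝ, HasDerivAt F (F' s) s)
    (hbound : ∀ s : ℝ, ‖F' s‖ ≤ ω * Real.sqrt (1 - (F s).re ^ 2))
    (hε : 0 < ε) (hεT : ε * (1 + T) < Real.pi / 2) :
    Real.cos (ε + (ω + ε) * T) ≤ (F T).re := by
  set c : ℝ := ω + ε with hc
  set W : ℝ → ℝ := fun s => (F s).re - Real.cos (ε + c * s) with hW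
  have hFc : Continuous fun s => (F s).re := by
    have : Continuous F := by
      rw [continuous_iff_continuousAt]; exact fun s => (hdiff s).continuousAt
    exact Complex.continuous_re.comp this
  have hWc : Continuous W := by
    apply hFc.sub
    exact Real.continuous_cos.comp (by continuity)
  by_contra hcon
  push_neg at hcon
  have hWT : W T ≤ 0 := by simpa [hW] using hcon.le
  set S : Set ℝ := Icc 0 T ∩ {s | W s ≤ 0} with hS
  have hSne : S.Nonempty := ⟨T, ⟨hT, le_rfl⟩, hWT⟩
  have hScl : IsClosed S := isClosed_Icc.inter (isClosed_le hWc continuous_const)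
  have hSbd : BddBelow S := ⟨0, fun s hs => hs.1.1⟩
  set t₀ : ℝ := sInf S with ht₀
  have ht₀S : t₀ ∈ S := hScl.csInf_mem hSne hSbd
  have ht₀0 : 0 ≤ t₀ := ht₀S.1.1
  have ht₀T : t₀ ≤ T := ht₀S.1.2
  have hεπ : ε < Real.pi / 2 := by nlinarith
  have hW00 : 0 < W 0 := by
    have : Real.cos ε < Real.cos 0 :=
      Real.cos_lt_cos_of_nonneg_of_le_pi le_rfl (by linarith [Real.pi_pos]) hε
    simp only [hW, Real.cos_zero] at this ⊢
    simp only [mul_zero, add_zero]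
    linarith [hF0]
  have ht₀pos : 0 < t₀ := by
    rcases lt_or_eq_of_le ht₀0 with h | h
    · exact h
    · exfalso; have := ht₀S.2; rw [← h] at this; exact absurd this (not_le.mpr hW00)
  have hlt : ∀ s, 0 ≤ s → s < t₀ → 0 < W s := by
    intro s hs0 hst
    by_contra h
    push_neg at h
    have hsS : s ∈ S := ⟨⟨hs0, hst.le.trans ht₀T⟩, h⟩
    exact absurd (csInf_le hSbd hsS) (not_le.mpr hst)
  have hWt₀ : W t₀ = 0 := by
    refine le_antisymm ht₀S.2 ?_
    have h1 : Tendsto W (𝓝[<] t₀) (𝓝 (W t₀)) :=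
      (hWc.tendsto t₀).mono_left nhdsWithin_le_nhds
    have h2 : ∀ᶠ s in 𝓝[<] t₀, 0 ≤ W s := by
      filter_upwards [Ioo_mem_nhdsLT_of_mem (show t₀ ∈ Ioc 0 t₀ from ⟨ht₀pos, le_rfl⟩)]
        with s hs
      exact (hlt s hs.1.le hs.2).le
    exact ge_of_tendsto h1 h2
  set θ : ℝ := ε + c * t₀ with hθ
  have hθ0 : 0 < θ := by positivity
  have hθπ : θ < Real.pi := by
    have h1 : c * t₀ ≤ c * T := by
      apply mul_le_mul_of_nonneg_left ht₀T (by positivity)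
    have : θ ≤ ε * (1 + T) + ω * T := by
      rw [hθ, hc]; nlinarith
    linarith [Real.pi_pos, hTω, hεT]
  have hsinθ : 0 < Real.sin θ := Real.sin_pos_of_pos_of_lt_pi hθ0 hθπ
  have hre : (F t₀).re = Real.cos θ := by
    have := hWt₀; simp only [hW] at this; linarith
  -- derivative of W at t₀
  have hFre : HasDerivAt (fun s => (F s).re) (F' t₀).re t₀ :=
    Complex.reCLM.hasFDerivAt.comp_hasDerivAt t₀ (hdiff t₀)
  have hin : HasDerivAt (fun s : ℝ => ε + c * s) c t₀ := by
    simpa using ((hasDerivAt_id t₀).const_mul c).const_add ε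
  have hcosd : HasDerivAt (fun s : ℝ => Real.cos (ε + c * s)) (-Real.sin θ * c) t₀ :=
    by have := (Real.hasDerivAt_cos (ε + c * t₀)).comp t₀ hin; exact this
  have hWd : HasDerivAt W ((F' t₀).re + Real.sin θ * c) t₀ := by
    have := hFre.sub hcosd
    rw [show (F' t₀).re + Real.sin θ * c = (F' t₀).re - -Real.sin θ * c by ring]
    exact this
  -- positivity of the derivative
  have hdpos : 0 < (F' t₀).re + Real.sin θ * c := by
    have hb := hbound t₀
    have hsq : 1 - (F t₀).re ^ 2 = Real.sin θ ^ 2 := by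
      rw [hre, Real.sin_sq]
    have hsqrt : Real.sqrt (1 - (F t₀).re ^ 2) = Real.sin θ := by
      rw [hsq, Real.sqrt_sq hsinθ.le]
    rw [hsqrt] at hb
    have habs : |(F' t₀).re| ≤ ‖F' t₀‖ := Complex.abs_re_le_norm (F' t₀)
    have : -(ω * Real.sin θ) ≤ (F' t₀).re := by
      have := (abs_le.mp (habs.trans hb)).1
      linarith
    have : (F' t₀).re + Real.sin θ * c ≥ ε * Real.sin θ := by
      rw [hc]; nlinarith
    nlinarith
  -- contradiction via slope from the left
  have hslope : Tendsto (slope W t₀) (𝓝[<] t₀) (𝓝 ((F' t₀).re + Real.sin θ * c)) :=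
    (hasDerivAt_iff_tendsto_slope.mp hWd).mono_left
      (nhdsWithin_mono _ fun s hs => ne_of_lt hs)
  have hev : ∀ᶠ s in 𝓝[<] t₀, 0 < slope W t₀ s := hslope.eventually (eventually_gt_nhds hdpos)
  have hev2 : Ioo 0 t₀ ∈ 𝓝[<] t₀ := Ioo_mem_nhdsLT_of_mem ⟨ht₀pos, le_rfl⟩
  obtain ⟨s, hs1, hs2⟩ := (hev.and (eventually_mem_set.mpr hev2)).exists
  have hsneg : s - t₀ < 0 := sub_neg.mpr hs2.2
  have : W s - W t₀ < 0 := by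
    by_contra h
    push_neg at h
    have : slope W t₀ s ≤ 0 := by
      rw [slope_def_field]
      exact div_nonpos_of_nonneg_of_nonpos (by linarith) hsneg.le
    exact absurd this (not_le.mpr hs1)
  rw [hWt₀] at this
  exact absurd (hlt s hs2.1.le hs2.2) (not_lt.mpr (by linarith))

private lemma mt_comp {F F' : ℝ → ℂ} {ω T : ℝ}
    (hω : 0 < ω) (hT : 0 ≤ T) (hTω : ω * T ≤ Real.pi / 2)
    (hF0 : (F 0).re = 1)
    (hdiff : ∀ s : ℝ, HasDerivAt F (F' s) s)
    (hbound : ∀ s : ℝ, ‖F' s‖ ≤ ω * Real.sqrt (1 - (F s).re ^ 2)) :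
    Real.cos (ω * T) ≤ (F T).re := by
  have h1T : 0 < 1 + T := by linarith
  have htend : Tendsto (fun ε : ℝ => Real.cos (ε + (ω + ε) * T)) (𝓝[>] 0)
      (𝓝 (Real.cos (ω * T))) := by
    have hcont : Continuous fun ε : ℝ => Real.cos (ε + (ω + ε) * T) := by continuity
    have := (hcont.tendsto 0).mono_left (nhdsWithin_le_nhds : 𝓝[>] (0:ℝ) ≤ 𝓝 0)
    simpa using this
  have hev : ∀ᶠ ε in 𝓝[>] (0:ℝ), Real.cos (ε + (ω + ε) * T) ≤ (F T).re := by
    filter_upwards [Ioo_mem_nhdsGT_of_mem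
      (show (0:ℝ) ∈ Ico 0 (Real.pi / (2 * (1 + T))) from
        ⟨le_rfl, by positivity⟩)] with ε hε
    refine mt_eps hω hT hTω hF0 hdiff hbound hε.1 ?_
    have := hε.2
    rw [lt_div_iff₀ (by positivity)] at this
    nlinarith
  exact le_of_tendsto htend hev



theorem stmt_15 {E : Type*} [NormedAddCommGroup E] [InnerProductSpace ℂ E] [CompleteSpace E]
    (H : E →L[ℂ] E) (hH : IsSelfAdjoint H)
    (ψ : E) (hψ : ‖ψ‖ = 1) (hbar : ℝ) (hhbar : 0 < hbar)
    (Ebar : ℝ) (hEbar : Ebar = (⟪ψ, H ψ⟫_ℂ).re)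
    (ΔE : ℝ)
    (hΔE : ΔE = Real.sqrt ((⟪ψ, ((H - Ebar • 1) * (H - Ebar • 1)) ψ⟫_ℂ).re))
    (hpos : 0 < ΔE)
    (t : ℝ) (ht0 : 0 ≤ t) (ht : t ≤ Real.pi * hbar / (2 * ΔE)) :
    Real.cos (t * ΔE / hbar) ^ 2
      ≤ ‖⟪ψ, (NormedSpace.exp ((-(Complex.I * t) / hbar) • H)) ψ⟫_ℂ‖ ^ 2 := by
  set A : E →L[ℂ] E := ((-Complex.I) / hbar) • H with hA
  have hUs : ∀ s : ℝ, (-(Complex.I * s) / hbar) • H = (s : ℂ) • A := by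
    intro s; rw [hA, smul_smul]; congr 1; ring
  set U : ℝ → E →L[ℂ] E := fun s => NormedSpace.exp ((s : ℂ) • A) with hUdef
  -- derivative of U
  have hUderiv : ∀ s : ℝ, HasDerivAt U (A * U s) s := by
    intro s
    have h1 : HasDerivAt (fun z : ℂ => NormedSpace.exp (z • A))
        (A * NormedSpace.exp ((s : ℂ) • A)) (s : ℂ) :=
      hasDerivAt_exp_smul_const' A (s : ℂ)
    have h2 := h1.scomp s Complex.ofRealCLM.hasDerivAt
    simpa [hUdef, Function.comp_def] using h2
  -- derivative of the inner amplitude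
  have hfd : ∀ s : ℝ, HasDerivAt (fun r : ℝ => (⟪ψ, U r ψ⟫_ℂ)) (⟪ψ, A (U s ψ)⟫_ℂ) s := by
    intro s
    have h := (((innerSL ℂ ψ).comp
      (ContinuousLinearMap.apply ℂ E ψ)).restrictScalars ℝ).hasFDerivAt.comp_hasDerivAt
      s (hUderiv s)
    simpa [Function.comp_def, ContinuousLinearMap.mul_apply] using h
  set a : ℂ := Complex.I * Ebar / hbar with ha
  set F : ℝ → ℂ := fun s => Complex.exp (a * s) * (⟪ψ, U s ψ⟫_ℂ) with hF
  set F' : ℝ → ℂ := fun s =>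
    Complex.exp (a * s) * (a * (⟪ψ, U s ψ⟫_ℂ) + (⟪ψ, A (U s ψ)⟫_ℂ)) with hF'
  have hFd : ∀ s : ℝ, HasDerivAt F (F' s) s := by
    intro s
    have hexp : HasDerivAt (fun r : ℝ => Complex.exp (a * r)) (Complex.exp (a * s) * a) s := by
      have h1 : HasDerivAt (fun z : ℂ => Complex.exp (a * z)) (Complex.exp (a * s) * a) (s : ℂ) := by
        simpa using ((hasDerivAt_id (s : ℂ)).const_mul a).cexp
      exact h1.comp_ofReal
    have := hexp.mul (hfd s)
    rw [show F' s = Complex.exp (a * ↑s) * a * ⟪ψ, (U s) ψ⟫_ℂ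
        + Complex.exp (a * ↑s) * ⟪ψ, A ((U s) ψ)⟫_ℂ by simp [hF']; ring]
    exact this
  -- basic facts
  have hψψ : (⟪ψ, ψ⟫_ℂ) = 1 := by
    rw [inner_self_eq_norm_sq_to_K, hψ]; norm_num
  have hself : ∀ (B : E →L[ℂ] E), IsSelfAdjoint B → ∀ x y : E, (⟪B x, y⟫_ℂ) = ⟪x, B y⟫_ℂ := by
    intro B hB x y
    have hB' : ContinuousLinearMap.adjoint B = B := by
      rw [← ContinuousLinearMap.star_eq_adjoint]; exact hB
    rw [← ContinuousLinearMap.adjoint_inner_left B y x, hB']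
  have hE : (⟪ψ, H ψ⟫_ℂ) = (Ebar : ℂ) := by
    have hconj : (starRingEnd ℂ) (⟪ψ, H ψ⟫_ℂ) = ⟪ψ, H ψ⟫_ℂ := by
      rw [inner_conj_symm]; exact hself H hH ψ ψ
    have h2 := Complex.conj_eq_iff_re.mp hconj
    rw [hEbar]; exact h2.symm
  -- unitarity
  have hstar : ∀ s : ℝ, star ((s : ℂ) • A) = -((s : ℂ) • A) := by
    intro s
    rw [star_smul, hA, star_smul, hH.star_eq]
    rw [show star ((-Complex.I) / (hbar : ℂ)) = Complex.I / hbar by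
      simp [Complex.star_def, map_div₀, Complex.conj_ofReal]]
    rw [show star ((s : ℝ) : ℂ) = (s : ℂ) by simp [Complex.star_def, Complex.conj_ofReal]]
    rw [smul_smul, smul_smul, ← neg_smul]
    congr 1; ring
  have hUnit : ∀ s : ℝ, star (U s) * U s = 1 := by
    intro s
    rw [hUdef]
    simp only []
    rw [NormedSpace.star_exp, hstar s,
      ← @NormedSpace.exp_add_of_commute _ _ (NormedAlgebra.restrictScalars ℚ ℂ (E →L[ℂ] E)) _ _ _ ((Commute.refl ((s:ℂ) • A)).neg_left),
      neg_add_cancel, NormedSpace.exp_zero]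
  have hnorm1 : ∀ s : ℝ, ‖U s ψ‖ = 1 := by
    intro s
    have h3 : (⟪U s ψ, U s ψ⟫_ℂ) = ⟪ψ, ψ⟫_ℂ := by
      rw [← ContinuousLinearMap.adjoint_inner_right (U s) ψ (U s ψ),
        ← ContinuousLinearMap.star_eq_adjoint, ← ContinuousLinearMap.mul_apply,
        hUnit s, ContinuousLinearMap.one_apply]
    have h3' : (⟪U s ψ, U s ψ⟫_ℂ).re = ‖U s ψ‖ ^ 2 := by
      rw [← RCLike.re_to_complex]
      exact inner_self_eq_norm_sq (U s ψ)
    have h4 : ‖U s ψ‖ ^ 2 = 1 := by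
      rw [← h3', h3, hψψ]
      simp
    rw [← Real.sqrt_sq (norm_nonneg (U s ψ)), h4, Real.sqrt_one]
  -- the centered vector
  set Kv : E := H ψ - (Ebar : ℂ) • ψ with hKv
  have hKapp : (H - Ebar • (1 : E →L[ℂ] E)) ψ = Kv := by
    rw [hKv, ContinuousLinearMap.sub_apply, ContinuousLinearMap.smul_apply,
      ContinuousLinearMap.one_apply]
    try congr 1
    try exact RCLike.real_smul_eq_coe_smul (K := ℂ) Ebar ψ
  have hKsa : IsSelfAdjoint (H - Ebar • (1 : E →L[ℂ] E)) :=
    hH.sub ((IsSelfAdjoint.all Ebar).smul (IsSelfAdjoint.one (E →L[ℂ] E)))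
  have hΔE' : ΔE = ‖Kv‖ := by
    rw [hΔE]
    have h5 : (⟪ψ, ((H - Ebar • 1) * (H - Ebar • 1)) ψ⟫_ℂ) = ⟪Kv, Kv⟫_ℂ := by
      rw [ContinuousLinearMap.mul_apply, ← hself _ hKsa ψ _, hKapp]
    have h5' : (⟪Kv, Kv⟫_ℂ).re = ‖Kv‖ ^ 2 := by
      rw [← RCLike.re_to_complex]
      exact inner_self_eq_norm_sq Kv
    rw [h5, h5', Real.sqrt_sq (norm_nonneg Kv)]
  have hinner0 : (⟪Kv, ψ⟫_ℂ) = 0 := by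
    rw [hKv, inner_sub_left, inner_smul_left, hψψ, Complex.conj_ofReal,
      hself H hH ψ ψ, hE]
    ring
  have hproj : ∀ s : ℝ, (⟪Kv, U s ψ - (⟪ψ, U s ψ⟫_ℂ) • ψ⟫_ℂ) = ⟪Kv, U s ψ⟫_ℂ := by
    intro s
    rw [inner_sub_right, inner_smul_right, hinner0]
    ring
  have hdiffnorm : ∀ s : ℝ, ‖U s ψ - (⟪ψ, U s ψ⟫_ℂ) • ψ‖ ^ 2
      = 1 - ‖⟪ψ, U s ψ⟫_ℂ‖ ^ 2 := by
    intro s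
    rw [@norm_sub_sq ℂ, inner_smul_right, hnorm1 s, norm_smul, hψ,
      ← inner_conj_symm (U s ψ) ψ]
    simp only [RCLike.re_to_complex]
    have h6 : ((⟪ψ, U s ψ⟫_ℂ) * (starRingEnd ℂ) (⟪ψ, U s ψ⟫_ℂ)).re
        = ‖⟪ψ, U s ψ⟫_ℂ‖ ^ 2 := by
      rw [Complex.mul_conj, ← Complex.normSq_eq_norm_sq, Complex.ofReal_re]
    rw [h6]
    simp
    ring
  have habsf : ∀ s : ℝ, ‖Complex.exp (a * s)‖ = 1 := by
    intro s
    rw [Complex.norm_exp]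
    have h7 : (a * (s : ℂ)).re = 0 := by
      rw [ha]
      simp [Complex.mul_re, Complex.div_re, Complex.ofReal_re, Complex.ofReal_im]
    rw [h7, Real.exp_zero]
  -- the derivative bound
  have hbound : ∀ s : ℝ, ‖F' s‖ ≤ (ΔE / hbar) * Real.sqrt (1 - (F s).re ^ 2) := by
    intro s
    have hkey : a * (⟪ψ, U s ψ⟫_ℂ) + (⟪ψ, A (U s ψ)⟫_ℂ)
        = ((-Complex.I) / hbar) * (⟪Kv, U s ψ - (⟪ψ, U s ψ⟫_ℂ) • ψ⟫_ℂ) := by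
      rw [hproj s]
      have h8 : (⟪ψ, A (U s ψ)⟫_ℂ) = ((-Complex.I) / hbar) * (⟪H ψ, U s ψ⟫_ℂ) := by
        rw [hA, ContinuousLinearMap.smul_apply, inner_smul_right, hself H hH]
      have h9 : (⟪Kv, U s ψ⟫_ℂ) = (⟪H ψ, U s ψ⟫_ℂ) - (Ebar : ℂ) * (⟪ψ, U s ψ⟫_ℂ) := by
        rw [hKv, inner_sub_left, inner_smul_left, Complex.conj_ofReal]
      rw [h8, h9, ha]
      ring
    have h10 : ‖F' s‖ = (1 / hbar) * ‖⟪Kv, U s ψ - (⟪ψ, U s ψ⟫_ℂ) • ψ⟫_ℂ‖ := by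
      rw [hF']
      simp only [norm_mul, habsf s, one_mul]
      rw [hkey, norm_mul, norm_div, norm_neg, Complex.norm_I, Complex.norm_real, Real.norm_eq_abs,
        abs_of_pos hhbar]
    have h11 : ‖⟪Kv, U s ψ - (⟪ψ, U s ψ⟫_ℂ) • ψ⟫_ℂ‖
        ≤ ‖Kv‖ * ‖U s ψ - (⟪ψ, U s ψ⟫_ℂ) • ψ‖ := by
      exact norm_inner_le_norm Kv _
    have h12 : ‖U s ψ - (⟪ψ, U s ψ⟫_ℂ) • ψ‖ ≤ Real.sqrt (1 - (F s).re ^ 2) := by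
      rw [← Real.sqrt_sq (norm_nonneg (U s ψ - (⟪ψ, U s ψ⟫_ℂ) • ψ)), hdiffnorm s]
      apply Real.sqrt_le_sqrt
      have h13 : (F s).re ^ 2 ≤ ‖⟪ψ, U s ψ⟫_ℂ‖ ^ 2 := by
        have h14 : |(F s).re| ≤ ‖F s‖ := Complex.abs_re_le_norm (F s)
        have h15 : ‖F s‖ = ‖⟪ψ, U s ψ⟫_ℂ‖ := by
          rw [hF]; simp only [norm_mul, habsf s, one_mul]
        rw [h15] at h14
        nlinarith [abs_nonneg ((F s).re), sq_abs ((F s).re)]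
      linarith
    calc ‖F' s‖ = (1 / hbar) * ‖⟪Kv, U s ψ - (⟪ψ, U s ψ⟫_ℂ) • ψ⟫_ℂ‖ := h10
      _ ≤ (1 / hbar) * (‖Kv‖ * Real.sqrt (1 - (F s).re ^ 2)) := by
          apply mul_le_mul_of_nonneg_left _ (by positivity)
          calc ‖⟪Kv, U s ψ - (⟪ψ, U s ψ⟫_ℂ) • ψ⟫_ℂ‖
              ≤ ‖Kv‖ * ‖U s ψ - (⟪ψ, U s ψ⟫_ℂ) • ψ‖ := h11
            _ ≤ ‖Kv‖ * Real.sqrt (1 - (F s).re ^ 2) :=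
                mul_le_mul_of_nonneg_left h12 (norm_nonneg Kv)
      _ = (ΔE / hbar) * Real.sqrt (1 - (F s).re ^ 2) := by rw [hΔE']; ring
  -- initial condition
  have hF0 : (F 0).re = 1 := by
    have hU0 : U 0 = 1 := by
      rw [hUdef]
      simp only [Complex.ofReal_zero, zero_smul, NormedSpace.exp_zero]
    rw [hF]
    simp [hU0, hψψ, hψ]
  -- apply the comparison lemma
  have hωpos : 0 < ΔE / hbar := div_pos hpos hhbar
  have hTω : (ΔE / hbar) * t ≤ Real.pi / 2 := by
    rw [div_mul_eq_mul_div, div_le_div_iff₀ hhbar (by norm_num : (0:ℝ) < 2)]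
    have h16 := (le_div_iff₀ (by positivity : (0:ℝ) < 2 * ΔE)).mp ht
    nlinarith
  have hkey := mt_comp hωpos ht0 hTω hF0 hFd hbound
  -- conclude
  have hc0 : 0 ≤ Real.cos (ΔE / hbar * t) := by
    apply Real.cos_nonneg_of_mem_Icc
    constructor
    · have h17 := mul_nonneg hωpos.le ht0
      linarith [Real.pi_pos]
    · exact hTω
  have hchain : Real.cos (ΔE / hbar * t) ≤ ‖⟪ψ, U t ψ⟫_ℂ‖ := by
    calc Real.cos (ΔE / hbar * t) ≤ (F t).re := hkey
      _ ≤ ‖F t‖ := Complex.re_le_norm (F t)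
      _ = ‖⟪ψ, U t ψ⟫_ℂ‖ := by rw [hF]; simp only [norm_mul, habsf t, one_mul]
  rw [hUs t]
  have harg : t * ΔE / hbar = ΔE / hbar * t := by ring
  rw [harg]
  exact pow_le_pow_left₀ hc0 hchain 2
end

section
/- Let f : ℝ → ℝ, g ∈ ℝ, E ∈ ℝ. Let φ : ℝ → ℂ be twice differentiable on (0,∞) and satisfy the singular-oscillator eigenvalue equation −(1/2)φ''(x) + (1/2)x²·φ(x) + (g²/x²)·φ(x) = E·φ(x) for all x > 0. Let u : ℝ → ℝ be twice differentiable with u''(t) + u'(t)² − e^{−4u(t)} + f(t) = 0 for all t, and let θ : ℝ → ℝ be differentiable with θ'(t) = e^{−2u(t)}. Define ψ(x,t) := exp(−i·θ(t)·E + (−u(t) + i·u'(t)·x²)/2)·φ(x·e^{−u(t)}). Then ψ solves the time-dependent Schrödinger equation i·∂ψ/∂t (x,t) = −(1/2)·∂²ψ/∂x² (x,t) + (1/2)·f(t)·x²·ψ(x,t) + (g²/x²)·ψ(x,t) for all x > 0 and t ∈ ℝ. -/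
open Complex

private lemma aux_A (θt E ut a : ℝ) (ξ : ℝ) :
    HasDerivAt (fun ξ' : ℝ => Complex.exp (-Complex.I * (θt : ℂ) * (E : ℂ)
        + (-(ut : ℂ) + Complex.I * (a : ℂ) * (ξ' : ℂ) ^ 2) / 2))
      (Complex.exp (-Complex.I * (θt : ℂ) * (E : ℂ)
        + (-(ut : ℂ) + Complex.I * (a : ℂ) * (ξ : ℂ) ^ 2) / 2)
        * (Complex.I * (a : ℂ) * (ξ : ℂ))) ξ := by
  have h0 : HasDerivAt (fun ξ' : ℝ => ((ξ' : ℂ))) 1 ξ := by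
    have := HasDerivAt.ofReal_comp (f := fun y : ℝ => y) (u := 1) (z := ξ) (hasDerivAt_id ξ)
    simpa using this
  have h1 : HasDerivAt (fun ξ' : ℝ => ((ξ' : ℂ)) ^ 2) (2 * (ξ : ℂ)) ξ := by
    have := h0.mul h0
    simp only [← pow_two] at this
    refine this.congr_deriv ?_
    ring
  have h2 := (((h1.const_mul (Complex.I * (a : ℂ))).const_add
      (-(ut : ℂ))).div_const 2).const_add (-Complex.I * (θt : ℂ) * (E : ℂ))
  have h3 := h2.cexp
  convert h3 using 1
  ring

private lemma aux_ofReal {h : ℝ → ℝ} {h' : ℝ} {ξ : ℝ} (hh : HasDerivAt h h' ξ) :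
    HasDerivAt (fun s : ℝ => ((h s : ℝ) : ℂ)) (h' : ℂ) ξ :=
  hh.ofReal_comp

private lemma aux_comp (c : ℝ) (φ φ' : ℝ → ℂ)
    (hφ : ∀ y : ℝ, 0 < y → HasDerivAt φ (φ' y) y) (hc : 0 < c)
    (ξ : ℝ) (hξ : 0 < ξ) :
    HasDerivAt (fun ξ' : ℝ => φ (ξ' * c)) ((c : ℂ) * φ' (ξ * c)) ξ := by
  have hin : HasDerivAt (fun ξ' : ℝ => ξ' * c) c ξ := by
    simpa using (hasDerivAt_id ξ).mul_const c
  have := (hφ (ξ * c) (by positivity)).scomp ξ hin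
  simpa [Complex.real_smul, Function.comp_def] using this

theorem stmt_19 (f : ℝ → ℝ) (g E : ℝ)
    (φ φ' φ'' : ℝ → ℂ)
    (hφ : ∀ x : ℝ, 0 < x → HasDerivAt φ (φ' x) x)
    (hφ' : ∀ x : ℝ, 0 < x → HasDerivAt φ' (φ'' x) x)
    (heigen : ∀ x : ℝ, 0 < x →
      -(1 / 2 : ℂ) * φ'' x + (1 / 2 : ℂ) * (x : ℂ) ^ 2 * φ x
        + ((g : ℂ) ^ 2 / (x : ℂ) ^ 2) * φ x = (E : ℂ) * φ x)
    (u u' u'' : ℝ → ℝ)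
    (hu : ∀ t, HasDerivAt u (u' t) t)
    (hu' : ∀ t, HasDerivAt u' (u'' t) t)
    (hueq : ∀ t, u'' t + u' t ^ 2 - Real.exp (-4 * u t) + f t = 0)
    (θ : ℝ → ℝ)
    (hθ : ∀ t, HasDerivAt θ (Real.exp (-2 * u t)) t)
    (ψ : ℝ → ℝ → ℂ)
    (hψ : ψ = fun (x t : ℝ) =>
      Complex.exp (-Complex.I * (θ t) * (E : ℂ)
          + (-(u t : ℂ) + Complex.I * (u' t : ℂ) * (x : ℂ) ^ 2) / 2)
        * φ (x * Real.exp (-u t))) :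
    ∀ x t : ℝ, 0 < x →
      Complex.I * deriv (fun τ => ψ x τ) t
        = -(1 / 2 : ℂ) * deriv (fun ξ => deriv (fun ξ' => ψ ξ' t) ξ) x
          + (1 / 2 : ℂ) * (f t : ℂ) * (x : ℂ) ^ 2 * ψ x t
          + ((g : ℂ) ^ 2 / (x : ℂ) ^ 2) * ψ x t := by
  intro x t hx
  simp only [hψ]
  have hc : (0 : ℝ) < Real.exp (-u t) := Real.exp_pos _
  have hxc : (0 : ℝ) < x * Real.exp (-u t) := by positivity
  -- first space derivative, at every positive point
  have hD1 : ∀ ξ : ℝ, 0 < ξ →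
      HasDerivAt (fun ξ' : ℝ => Complex.exp (-Complex.I * (θ t : ℂ) * (E : ℂ)
          + (-(u t : ℂ) + Complex.I * (u' t : ℂ) * (ξ' : ℂ) ^ 2) / 2)
          * φ (ξ' * Real.exp (-u t)))
        (Complex.exp (-Complex.I * (θ t : ℂ) * (E : ℂ)
          + (-(u t : ℂ) + Complex.I * (u' t : ℂ) * (ξ : ℂ) ^ 2) / 2)
          * (Complex.I * (u' t : ℂ) * (ξ : ℂ) * φ (ξ * Real.exp (-u t))
            + (Real.exp (-u t) : ℂ) * φ' (ξ * Real.exp (-u t)))) ξ := by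
    intro ξ hξ
    have := (aux_A (θ t) E (u t) (u' t) ξ).mul
      (aux_comp (Real.exp (-u t)) φ φ' hφ hc ξ hξ)
    refine this.congr_deriv ?_
    ring
  -- second space derivative
  have h0x : HasDerivAt (fun ξ' : ℝ => ((ξ' : ℂ))) 1 x := by
    have := HasDerivAt.ofReal_comp (f := fun y : ℝ => y) (u := 1) (z := x) (hasDerivAt_id x)
    simpa using this
  have hB1 : HasDerivAt (fun ξ' : ℝ => Complex.I * (u' t : ℂ) * (ξ' : ℂ)
        * φ (ξ' * Real.exp (-u t)))
      (Complex.I * (u' t : ℂ) * φ (x * Real.exp (-u t))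
        + Complex.I * (u' t : ℂ) * (x : ℂ)
          * ((Real.exp (-u t) : ℂ) * φ' (x * Real.exp (-u t)))) x := by
    have := (h0x.const_mul (Complex.I * (u' t : ℂ))).mul
      (aux_comp (Real.exp (-u t)) φ φ' hφ hc x hx)
    refine this.congr_deriv ?_
    ring
  have hB2 : HasDerivAt (fun ξ' : ℝ => (Real.exp (-u t) : ℂ) * φ' (ξ' * Real.exp (-u t)))
      ((Real.exp (-u t) : ℂ) * ((Real.exp (-u t) : ℂ) * φ'' (x * Real.exp (-u t)))) x :=
    (aux_comp (Real.exp (-u t)) φ' φ'' hφ' hc x hx).const_mul _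
  have hD2 := (aux_A (θ t) E (u t) (u' t) x).mul (hB1.add hB2)
  have key2 : deriv (fun ξ => deriv (fun ξ' : ℝ =>
        Complex.exp (-Complex.I * (θ t : ℂ) * (E : ℂ)
          + (-(u t : ℂ) + Complex.I * (u' t : ℂ) * (ξ' : ℂ) ^ 2) / 2)
          * φ (ξ' * Real.exp (-u t))) ξ) x
      = Complex.exp (-Complex.I * (θ t : ℂ) * (E : ℂ)
          + (-(u t : ℂ) + Complex.I * (u' t : ℂ) * (x : ℂ) ^ 2) / 2)
          * (Complex.I * (u' t : ℂ) * (x : ℂ))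
          * (Complex.I * (u' t : ℂ) * (x : ℂ) * φ (x * Real.exp (-u t))
            + (Real.exp (-u t) : ℂ) * φ' (x * Real.exp (-u t)))
        + Complex.exp (-Complex.I * (θ t : ℂ) * (E : ℂ)
          + (-(u t : ℂ) + Complex.I * (u' t : ℂ) * (x : ℂ) ^ 2) / 2)
          * (Complex.I * (u' t : ℂ) * φ (x * Real.exp (-u t))
            + Complex.I * (u' t : ℂ) * (x : ℂ)
              * ((Real.exp (-u t) : ℂ) * φ' (x * Real.exp (-u t)))
            + (Real.exp (-u t) : ℂ)
              * ((Real.exp (-u t) : ℂ) * φ'' (x * Real.exp (-u t)))) := by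
    have hEq : (fun ξ => deriv (fun ξ' : ℝ =>
        Complex.exp (-Complex.I * (θ t : ℂ) * (E : ℂ)
          + (-(u t : ℂ) + Complex.I * (u' t : ℂ) * (ξ' : ℂ) ^ 2) / 2)
          * φ (ξ' * Real.exp (-u t))) ξ)
        =ᶠ[nhds x] (fun ξ =>
          Complex.exp (-Complex.I * (θ t : ℂ) * (E : ℂ)
            + (-(u t : ℂ) + Complex.I * (u' t : ℂ) * (ξ : ℂ) ^ 2) / 2)
            * (Complex.I * (u' t : ℂ) * (ξ : ℂ) * φ (ξ * Real.exp (-u t))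
              + (Real.exp (-u t) : ℂ) * φ' (ξ * Real.exp (-u t)))) := by
      filter_upwards [Ioi_mem_nhds hx] with ξ hξ
      exact (hD1 ξ hξ).deriv
    rw [hEq.deriv_eq]
    exact hD2.deriv
  -- time derivative
  have hθC := aux_ofReal (hθ t)
  have huC := aux_ofReal (hu t)
  have hu'C := aux_ofReal (hu' t)
  have he1 := (hθC.const_mul (-Complex.I)).mul_const (E : ℂ)
  have he3' := (hu'C.const_mul Complex.I).mul_const ((x : ℂ) ^ 2)
  have hexp := ((he1.add ((huC.neg.add he3').div_const 2))).cexp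
  have hin : HasDerivAt (fun τ : ℝ => x * Real.exp (-u τ))
      (x * (Real.exp (-u t) * -(u' t))) t := by
    have := ((hu t).neg.exp).const_mul x
    simpa using this
  have hcompT : HasDerivAt (fun τ : ℝ => φ (x * Real.exp (-u τ)))
      (((x * (Real.exp (-u t) * -(u' t)) : ℝ) : ℂ) * φ' (x * Real.exp (-u t))) t := by
    have := (hφ (x * Real.exp (-u t)) hxc).scomp t hin
    simpa [Complex.real_smul, Function.comp_def] using this
  have hT := hexp.mul hcompT
  have hT' : HasDerivAt (fun τ : ℝ => Complex.exp (-Complex.I * (θ τ : ℂ) * (E : ℂ)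
        + (-(u τ : ℂ) + Complex.I * (u' τ : ℂ) * (x : ℂ) ^ 2) / 2) * φ (x * Real.exp (-u τ)))
      (Complex.exp (-Complex.I * (θ t : ℂ) * (E : ℂ)
          + (-(u t : ℂ) + Complex.I * (u' t : ℂ) * (x : ℂ) ^ 2) / 2)
          * (-Complex.I * ((Real.exp (-2 * u t) : ℝ) : ℂ) * (E : ℂ)
            + (-(u' t : ℂ) + Complex.I * (u'' t : ℂ) * (x : ℂ) ^ 2) / 2)
          * φ (x * Real.exp (-u t))
        + Complex.exp (-Complex.I * (θ t : ℂ) * (E : ℂ)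
          + (-(u t : ℂ) + Complex.I * (u' t : ℂ) * (x : ℂ) ^ 2) / 2)
          * ((((x * (Real.exp (-u t) * -(u' t))) : ℝ) : ℂ) * φ' (x * Real.exp (-u t)))) t := hT
  rw [key2, hT'.deriv]
  -- algebraic identities
  have hc2 : ((Real.exp (-2 * u t) : ℝ) : ℂ) = ((Real.exp (-u t) : ℝ) : ℂ) ^ 2 := by
    have : Real.exp (-2 * u t) = Real.exp (-u t) ^ 2 := by
      rw [sq, ← Real.exp_add]; congr 1; ring
    exact_mod_cast this
  have hricC : ((u'' t : ℝ) : ℂ) = ((Real.exp (-u t) : ℝ) : ℂ) ^ 4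
      - ((u' t : ℝ) : ℂ) ^ 2 - ((f t : ℝ) : ℂ) := by
    have h4 : Real.exp (-4 * u t) = Real.exp (-u t) ^ 4 := by
      rw [show (-4 : ℝ) * u t = -u t + -u t + -u t + -u t by ring,
        Real.exp_add, Real.exp_add, Real.exp_add]; ring
    have h := hueq t
    have : u'' t = Real.exp (-u t) ^ 4 - u' t ^ 2 - f t := by rw [← h4]; linarith
    exact_mod_cast this
  have hxne : (x : ℂ) ≠ 0 := Complex.ofReal_ne_zero.2 hx.ne'
  have hcne : ((Real.exp (-u t) : ℝ) : ℂ) ≠ 0 := Complex.ofReal_ne_zero.2 hc.ne'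
  have he3 : -(1 / 2 : ℂ) * ((Real.exp (-u t) : ℝ) : ℂ) ^ 2 * φ'' (x * Real.exp (-u t))
      + (1 / 2 : ℂ) * (x : ℂ) ^ 2 * ((Real.exp (-u t) : ℝ) : ℂ) ^ 4 * φ (x * Real.exp (-u t))
      + (g : ℂ) ^ 2 / (x : ℂ) ^ 2 * φ (x * Real.exp (-u t))
      = (E : ℂ) * ((Real.exp (-u t) : ℝ) : ℂ) ^ 2 * φ (x * Real.exp (-u t)) := by
    have he := heigen _ hxc
    have hpush : ((x * Real.exp (-u t) : ℝ) : ℂ) = (x : ℂ) * ((Real.exp (-u t) : ℝ) : ℂ) := by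
      push_cast; ring
    rw [hpush] at he
    field_simp at he ⊢
    linear_combination he
  have hI : Complex.I ^ 2 = -1 := Complex.I_sq
  simp only [Complex.ofReal_mul, Complex.ofReal_neg]
  linear_combination
    (-(Complex.exp (-Complex.I * (θ t : ℂ) * (E : ℂ)
      + (-(u t : ℂ) + Complex.I * (u' t : ℂ) * (x : ℂ) ^ 2) / 2))) * he3
    + (Complex.exp (-Complex.I * (θ t : ℂ) * (E : ℂ)
      + (-(u t : ℂ) + Complex.I * (u' t : ℂ) * (x : ℂ) ^ 2) / 2) * (E : ℂ)
      * φ (x * Real.exp (-u t))) * hc2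
    + (-(Complex.exp (-Complex.I * (θ t : ℂ) * (E : ℂ)
      + (-(u t : ℂ) + Complex.I * (u' t : ℂ) * (x : ℂ) ^ 2) / 2)
      * (x : ℂ) ^ 2 / 2 * φ (x * Real.exp (-u t)))) * hricC
    + (Complex.exp (-Complex.I * (θ t : ℂ) * (E : ℂ)
      + (-(u t : ℂ) + Complex.I * (u' t : ℂ) * (x : ℂ) ^ 2) / 2)
      * (-(((Real.exp (-2 * u t) : ℝ) : ℂ)) * (E : ℂ)
        + ((u' t : ℂ) ^ 2 + (u'' t : ℂ)) * (x : ℂ) ^ 2 / 2)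
      * φ (x * Real.exp (-u t))) * hI
end
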